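/- Let G = (V, E) be a finite simple claw-free graph, let C ⊆ V induce a cycle of length at least 4, and let j ∉ C be a vertex with an odd number of neighbors in C. Then either |C| = 5 and j is adjacent to all five vertices of C, or j has exactly three neighbors in C and these are three consecutive vertices of the cycle, i.e., the set of neighbors of j in C is {u, k, v} where u and v are the two neighbors of k within C. (Part of Lemma 2, cases (b.i) and (b.ii).) -/
import Mathlib


open scoped Classical

universe u

/-- `G` is claw-free: no vertex has three pairwise distinct, pairwise non-adjacent neighbors. -/
def ClawFree {V : Type u} (G : SimpleGraph V) : Prop :=
  ¬ ∃ c x y z : V, x ≠ y ∧ x ≠ z ∧ y ≠ z ∧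
    G.Adj c x ∧ G.Adj c y ∧ G.Adj c z ∧ ¬ G.Adj x y ∧ ¬ G.Adj x z ∧ ¬ G.Adj y z

/-- `C` induces a cycle of length at least 4 in `G`: it has at least four vertices, the
induced subgraph is connected, and every vertex of `C` has exactly two neighbors in `C`. -/
def IsHole {V : Type u} [DecidableEq V] (G : SimpleGraph V) (C : Finset V) : Prop :=
  4 ≤ C.card ∧ (G.induce (C : Set V)).Connected ∧
    ∀ v ∈ C, (C.filter fun u => G.Adj v u).card = 2

lemma three_distinct {V : Type u} {s : Finset V} (h : 3 ≤ s.card) :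
    ∃ p q r, p ∈ s ∧ q ∈ s ∧ r ∈ s ∧ p ≠ q ∧ p ≠ r ∧ q ≠ r := by
  obtain ⟨t, hts, ht3⟩ := s.exists_subset_card_eq h
  obtain ⟨p,q,r,hpq,hpr,hqr,rfl⟩ := Finset.card_eq_three.mp ht3
  exact ⟨p,q,r, hts (by simp), hts (by simp), hts (by simp), hpq,hpr,hqr⟩

/-- In a connected induced subgraph, a nonempty subset closed under adjacency is everything. -/
lemma closed_subset {V : Type u} [DecidableEq V] (G : SimpleGraph V) (C : Finset V)
    (hconn : (G.induce (C : Set V)).Connected) (S : Finset V) (hSC : S ⊆ C)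
    (x : V) (hx : x ∈ S) (hcl : ∀ s ∈ S, ∀ t ∈ C, G.Adj s t → t ∈ S) :
    ∀ c ∈ C, c ∈ S := by
  intro c hc
  have hxC : x ∈ C := hSC hx
  have key : ∀ (u v : (C : Set V)), (G.induce (C : Set V)).Walk u v → u.1 ∈ S → v.1 ∈ S := by
    intro u v w
    induction w with
    | nil => exact id
    | @cons u b v h p ih =>
      intro hu
      exact ih (hcl _ hu _ (by simpa using b.2) (by simpa using h))
  obtain ⟨w⟩ := hconn.preconnected ⟨x, by simpa using hxC⟩ ⟨c, by simpa using hc⟩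
  exact key _ _ w hx

theorem odd_neighbors_in_hole {V : Type u} [Fintype V] [DecidableEq V]
    (G : SimpleGraph V) (hcf : ClawFree G) (C : Finset V) (hC : IsHole G C)
    (j : V) (hj : j ∉ C) (hodd : Odd (C.filter fun v => G.Adj j v).card) :
    (C.card = 5 ∧ ∀ v ∈ C, G.Adj j v) ∨
    (∃ u k v : V, u ∈ C ∧ k ∈ C ∧ v ∈ C ∧ u ≠ v ∧ G.Adj k u ∧ G.Adj k v ∧
      C.filter (fun w => G.Adj j w) = {u, k, v}) := by
  obtain ⟨hcard4, hconn, hdeg⟩ := hC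
  set A : Finset V := C.filter (fun v => G.Adj j v) with hAdef
  have memA : ∀ v, v ∈ A ↔ v ∈ C ∧ G.Adj j v := by
    intro v; simp [hAdef]
  have hAsub : A ⊆ C := Finset.filter_subset _ _
  -- uniqueness of the two neighbours inside C
  have unique2 : ∀ x ∈ C, ∀ a b, a ∈ C → b ∈ C → a ≠ b → G.Adj x a → G.Adj x b →
      ∀ w ∈ C, G.Adj x w → w = a ∨ w = b := by
    intro x hx a b ha hb hab hxa hxb w hw hxw
    have hsubs : ({a, b} : Finset V) ⊆ C.filter (fun u => G.Adj x u) := by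
      intro t ht
      rcases Finset.mem_insert.mp ht with rfl | ht
      · exact Finset.mem_filter.mpr ⟨ha, hxa⟩
      · rcases Finset.mem_singleton.mp ht with rfl
        exact Finset.mem_filter.mpr ⟨hb, hxb⟩
    have hcards : (C.filter (fun u => G.Adj x u)).card ≤ ({a, b} : Finset V).card := by
      rw [hdeg x hx, Finset.card_insert_of_notMem (by simpa using hab), Finset.card_singleton]
    have heq := Finset.eq_of_subset_of_card_le hsubs hcards
    have : w ∈ ({a, b} : Finset V) := heq ▸ Finset.mem_filter.mpr ⟨hw, hxw⟩
    simpa using this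
  -- existence of the two neighbours
  have nbrs : ∀ x ∈ C, ∃ a b, a ∈ C ∧ b ∈ C ∧ a ≠ b ∧ G.Adj x a ∧ G.Adj x b ∧
      ∀ w ∈ C, G.Adj x w → w = a ∨ w = b := by
    intro x hx
    obtain ⟨a, b, hab, hfil⟩ := Finset.card_eq_two.mp (hdeg x hx)
    have ha : a ∈ C.filter (fun u => G.Adj x u) := by rw [hfil]; simp
    have hb : b ∈ C.filter (fun u => G.Adj x u) := by rw [hfil]; simp
    obtain ⟨haC, hxa⟩ := Finset.mem_filter.mp ha
    obtain ⟨hbC, hxb⟩ := Finset.mem_filter.mp hb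
    exact ⟨a, b, haC, hbC, hab, hxa, hxb, unique2 x hx a b haC hbC hab hxa hxb⟩
  -- no triangle in C
  have hTri : ∀ x ∈ C, ∀ a ∈ C, ∀ b ∈ C, G.Adj x a → G.Adj x b → G.Adj a b → False := by
    intro x hx a ha b hb hxa hxb hab
    have hux := unique2 x hx a b ha hb hab.ne hxa hxb
    have hua := unique2 a ha x b hx hb hxb.ne hxa.symm hab
    have hub := unique2 b hb x a hx ha hxa.ne hxb.symm hab.symm
    have hScl : ∀ s ∈ ({x, a, b} : Finset V), ∀ t ∈ C, G.Adj s t → t ∈ ({x, a, b} : Finset V) := by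
      intro s hs t ht hst
      simp only [Finset.mem_insert, Finset.mem_singleton] at hs ⊢
      rcases hs with rfl | rfl | rfl
      · rcases hux t ht hst with rfl | rfl <;> simp
      · rcases hua t ht hst with rfl | rfl <;> simp
      · rcases hub t ht hst with rfl | rfl <;> simp
    have hSC : ({x, a, b} : Finset V) ⊆ C := by
      intro t ht
      simp only [Finset.mem_insert, Finset.mem_singleton] at ht
      rcases ht with rfl | rfl | rfl <;> assumption
    have hall := closed_subset G C hconn {x, a, b} hSC x (by simp) hScl
    have : C ⊆ ({x, a, b} : Finset V) := fun c hc => hall c hc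
    have hle : C.card ≤ 3 := le_trans (Finset.card_le_card this)
      (le_trans (Finset.card_insert_le _ _) (by
        simpa using Nat.add_le_add_right (Finset.card_insert_le a {b}) 1))
    omega
  -- no independent triple inside A
  have hind : ∀ x ∈ A, ∀ y ∈ A, ∀ z ∈ A, x ≠ y → x ≠ z → y ≠ z →
      ¬ G.Adj x y → ¬ G.Adj x z → ¬ G.Adj y z → False := by
    intro x hx y hy z hz hxy hxz hyz nxy nxz nyz
    exact hcf ⟨j, x, y, z, hxy, hxz, hyz, ((memA x).mp hx).2, ((memA y).mp hy).2,
      ((memA z).mp hz).2, nxy, nxz, nyz⟩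
  -- among three distinct vertices of C, some pair is non-adjacent
  have hpair : ∀ p ∈ C, ∀ q ∈ C, ∀ r ∈ C, p ≠ q → p ≠ r → q ≠ r →
      ∃ s t, s ≠ t ∧ (s = p ∨ s = q ∨ s = r) ∧ (t = p ∨ t = q ∨ t = r) ∧ ¬ G.Adj s t := by
    intro p hp q hq r hr hpq hpr hqr
    by_cases h1 : G.Adj p q
    · by_cases h2 : G.Adj p r
      · exact ⟨q, r, hqr, by tauto, by tauto, fun h => hTri p hp q hq r hr h1 h2 h⟩
      · exact ⟨p, r, hpr, by tauto, by tauto, h2⟩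
    · exact ⟨p, q, hpq, by tauto, by tauto, h1⟩
  -- every vertex of A has a G-neighbour in A
  have hdegA : ∀ x ∈ A, ∃ y ∈ A, G.Adj x y := by
    intro x hx
    obtain ⟨hxC, hjx⟩ := (memA x).mp hx
    obtain ⟨a, b, haC, hbC, hab, hxa, hxb, huniq⟩ := nbrs x hxC
    by_cases haA : a ∈ A
    · exact ⟨a, haA, hxa⟩
    by_cases hbA : b ∈ A
    · exact ⟨b, hbA, hxb⟩
    exfalso
    have nja : ¬ G.Adj j a := fun h => haA ((memA a).mpr ⟨haC, h⟩)
    have njb : ¬ G.Adj j b := fun h => hbA ((memA b).mpr ⟨hbC, h⟩)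
    have nab : ¬ G.Adj a b := fun h => hTri x hxC a haC b hbC hxa hxb h
    exact hcf ⟨x, j, a, b, fun h => hj (h ▸ haC), fun h => hj (h ▸ hbC), hab,
      hjx.symm, hxa, hxb, nja, njb, nab⟩
  -- nonadjacency of x to anything in C other than its two neighbours
  -- cardinality bound : |A| ≤ 5
  have hA1 : 1 ≤ A.card := by
    obtain ⟨m, hm⟩ := hodd; omega
  obtain ⟨x0, hx0⟩ := Finset.card_pos.mp hA1
  have hcardA5 : A.card ≤ 5 := by
    obtain ⟨hx0C, hjx0⟩ := (memA x0).mp hx0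
    obtain ⟨a, b, haC, hbC, hab, hxa, hxb, huniq⟩ := nbrs x0 hx0C
    by_contra h5
    have hD : 3 ≤ (A \ {x0, a, b}).card := by
      have := Finset.card_le_card_sdiff_add_card (s := A) (t := ({x0, a, b} : Finset V))
      have h3 : ({x0, a, b} : Finset V).card ≤ 3 :=
        le_trans (Finset.card_insert_le _ _) (by
          simpa using Nat.add_le_add_right (Finset.card_insert_le a {b}) 1)
      omega
    obtain ⟨p, q, r, hp, hq, hr, hpq, hpr, hqr⟩ := three_distinct hD
    have hmemD : ∀ t ∈ (A \ ({x0, a, b} : Finset V)), t ∈ A ∧ t ≠ x0 ∧ ¬ G.Adj x0 t := by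
      intro t ht
      obtain ⟨htA, htn⟩ := Finset.mem_sdiff.mp ht
      simp only [Finset.mem_insert, Finset.mem_singleton] at htn
      push_neg at htn
      refine ⟨htA, htn.1, fun h => ?_⟩
      rcases huniq t (hAsub htA) h with rfl | rfl
      · exact htn.2.1 rfl
      · exact htn.2.2 rfl
    obtain ⟨hpA, hpx, hpn⟩ := hmemD p hp
    obtain ⟨hqA, hqx, hqn⟩ := hmemD q hq
    obtain ⟨hrA, hrx, hrn⟩ := hmemD r hr
    obtain ⟨s, t, hst, hs, ht, hnst⟩ :=
      hpair p (hAsub hpA) q (hAsub hqA) r (hAsub hrA) hpq hpr hqr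
    have hsA : s ∈ A := by rcases hs with rfl | rfl | rfl <;> assumption
    have htA : t ∈ A := by rcases ht with rfl | rfl | rfl <;> assumption
    have hsx : s ≠ x0 := by rcases hs with rfl | rfl | rfl <;> assumption
    have htx : t ≠ x0 := by rcases ht with rfl | rfl | rfl <;> assumption
    have hsn : ¬ G.Adj x0 s := by rcases hs with rfl | rfl | rfl <;> assumption
    have htn : ¬ G.Adj x0 t := by rcases ht with rfl | rfl | rfl <;> assumption
    exact hind x0 hx0 s hsA t htA (Ne.symm hsx) (Ne.symm htx) hst hsn htn hnst
  have hA35 : A.card = 3 ∨ A.card = 5 := by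
    obtain ⟨m, hm⟩ := hodd
    have : A.card ≠ 1 := by
      intro h1
      obtain ⟨x, hx⟩ := Finset.card_eq_one.mp h1
      obtain ⟨y, hy, hxy⟩ := hdegA x (by rw [hx]; simp)
      rw [hx, Finset.mem_singleton] at hy
      exact G.irrefl (hy ▸ hxy)
    omega
  rcases hA35 with h3 | h5
  · -- three consecutive vertices
    right
    obtain ⟨x, y, z, hxy, hxz, hyz, hAxyz⟩ := Finset.card_eq_three.mp h3
    have hxA : x ∈ A := by rw [hAxyz]; simp
    have hyA : y ∈ A := by rw [hAxyz]; simp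
    have hzA : z ∈ A := by rw [hAxyz]; simp
    have hxC := hAsub hxA; have hyC := hAsub hyA; have hzC := hAsub hzA
    have hconc : ∀ u k v : V, u ∈ A → k ∈ A → v ∈ A → u ≠ v → G.Adj k u → G.Adj k v →
        ({u, k, v} : Finset V) = {x, y, z} →
        (∃ u k v : V, u ∈ C ∧ k ∈ C ∧ v ∈ C ∧ u ≠ v ∧ G.Adj k u ∧ G.Adj k v ∧
          C.filter (fun w => G.Adj j w) = {u, k, v}) := by
      intro u k v hu hk hv huv hku hkv hset
      exact ⟨u, k, v, hAsub hu, hAsub hk, hAsub hv, huv, hku, hkv, by rw [← hAdef, hAxyz, ← hset]⟩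
    obtain ⟨w, hwA, hzw⟩ := hdegA z hzA
    have hwmem : w = x ∨ w = y := by
      have : w ∈ ({x, y, z} : Finset V) := hAxyz ▸ hwA
      simp only [Finset.mem_insert, Finset.mem_singleton] at this
      rcases this with rfl | rfl | rfl
      · left; rfl
      · right; rfl
      · exact absurd hzw (G.irrefl)
    rcases hwmem with h | h
    · -- z ~ x ; now look at y
      have hzx : G.Adj z x := h ▸ hzw
      obtain ⟨w', hw'A, hyw'⟩ := hdegA y hyA
      have hw'mem : w' = x ∨ w' = z := by
        have : w' ∈ ({x, y, z} : Finset V) := hAxyz ▸ hw'A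
        simp only [Finset.mem_insert, Finset.mem_singleton] at this
        rcases this with rfl | rfl | rfl
        · left; rfl
        · exact absurd hyw' (G.irrefl)
        · right; rfl
      rcases hw'mem with h' | h'
      · -- y ~ x, z ~ x : centre x
        have hyx : G.Adj y x := h' ▸ hyw'
        exact hconc y x z hyA hxA hzA hyz hyx.symm hzx.symm
          (by ext t; simp only [Finset.mem_insert, Finset.mem_singleton]; tauto)
      · -- y ~ z, z ~ x : centre z
        have hyz' : G.Adj y z := h' ▸ hyw'
        exact hconc x z y hxA hzA hyA hxy hzx hyz'.symm
          (by ext t; simp only [Finset.mem_insert, Finset.mem_singleton]; tauto)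
    · -- z ~ y ; now look at x
      have hzy : G.Adj z y := h ▸ hzw
      obtain ⟨w', hw'A, hxw'⟩ := hdegA x hxA
      have hw'mem : w' = y ∨ w' = z := by
        have : w' ∈ ({x, y, z} : Finset V) := hAxyz ▸ hw'A
        simp only [Finset.mem_insert, Finset.mem_singleton] at this
        rcases this with rfl | rfl | rfl
        · exact absurd hxw' (G.irrefl)
        · left; rfl
        · right; rfl
      rcases hw'mem with h' | h'
      · -- x ~ y, z ~ y : centre y
        have hxy' : G.Adj x y := h' ▸ hxw'
        exact hconc x y z hxA hyA hzA hxz hxy'.symm hzy.symm rfl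
      · -- x ~ z, z ~ y : centre z
        have hxz' : G.Adj x z := h' ▸ hxw'
        exact hconc x z y hxA hzA hyA hxy hxz'.symm hzy
          (by ext t; simp only [Finset.mem_insert, Finset.mem_singleton]; tauto)
  · -- |A| = 5 : A = C
    left
    -- both C-neighbours of any vertex of A lie in A
    have hauxnbr : ∀ x ∈ A, ∀ a b : V, a ∈ C → b ∈ C → a ≠ b → G.Adj x a → G.Adj x b →
        (∀ w ∈ C, G.Adj x w → w = a ∨ w = b) → a ∈ A := by
      intro x hx a b haC hbC hab hxa hxb huniq
      by_contra haA
      have hD : 3 ≤ (A \ {x, b}).card := by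
        have := Finset.card_le_card_sdiff_add_card (s := A) (t := ({x, b} : Finset V))
        have h2 : ({x, b} : Finset V).card ≤ 2 :=
          le_trans (Finset.card_insert_le _ _) (by simp)
        omega
      obtain ⟨p, q, r, hp, hq, hr, hpq, hpr, hqr⟩ := three_distinct hD
      have hmemD : ∀ t ∈ (A \ ({x, b} : Finset V)), t ∈ A ∧ t ≠ x ∧ ¬ G.Adj x t := by
        intro t ht
        obtain ⟨htA, htn⟩ := Finset.mem_sdiff.mp ht
        simp only [Finset.mem_insert, Finset.mem_singleton] at htn
        push_neg at htn
        refine ⟨htA, htn.1, fun h => ?_⟩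
        rcases huniq t (hAsub htA) h with rfl | rfl
        · exact haA htA
        · exact htn.2 rfl
      obtain ⟨hpA, hpx, hpn⟩ := hmemD p hp
      obtain ⟨hqA, hqx, hqn⟩ := hmemD q hq
      obtain ⟨hrA, hrx, hrn⟩ := hmemD r hr
      obtain ⟨s, t, hst, hs, ht, hnst⟩ :=
        hpair p (hAsub hpA) q (hAsub hqA) r (hAsub hrA) hpq hpr hqr
      have hsA : s ∈ A := by rcases hs with rfl | rfl | rfl <;> assumption
      have htA : t ∈ A := by rcases ht with rfl | rfl | rfl <;> assumption
      have hsx : s ≠ x := by rcases hs with rfl | rfl | rfl <;> assumption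
      have htx : t ≠ x := by rcases ht with rfl | rfl | rfl <;> assumption
      have hsn : ¬ G.Adj x s := by rcases hs with rfl | rfl | rfl <;> assumption
      have htn : ¬ G.Adj x t := by rcases ht with rfl | rfl | rfl <;> assumption
      exact hind x hx s hsA t htA (Ne.symm hsx) (Ne.symm htx) hst hsn htn hnst
    have hclosed : ∀ s ∈ A, ∀ t ∈ C, G.Adj s t → t ∈ A := by
      intro s hs t ht hst
      obtain ⟨a, b, haC, hbC, hab, hsa, hsb, huniq⟩ := nbrs s (hAsub hs)
      have haA : a ∈ A := hauxnbr s hs a b haC hbC hab hsa hsb huniq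
      have hbA : b ∈ A := hauxnbr s hs b a hbC haC hab.symm hsb hsa
        (fun w hw h => (huniq w hw h).symm)
      rcases huniq t ht hst with rfl | rfl <;> assumption
    have hCA : ∀ c ∈ C, c ∈ A := closed_subset G C hconn A hAsub x0 hx0 hclosed
    have hAC : A = C := Finset.Subset.antisymm hAsub (fun c hc => hCA c hc)
    exact ⟨by rw [← hAC]; exact h5, fun v hv => ((memA v).mp (hCA v hv)).2⟩
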